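/- If f ∈ k⟨x⟩ is nonconstant, then there exists N ∈ ℕ such that for every n ≥ N the determinant det f(𝔛ⁿ) ∈ Rₙ is a nonconstant polynomial, i.e., it does not lie in the image of the structure map k → Rₙ. -/

import Mathlib

/-- An element of the free algebra is *constant* if it lies in the image of the
structure map `k → k⟨x⟩`; otherwise it is *nonconstant*. -/
def Nonconstant (k : Type*) [CommSemiring k] (d : ℕ) (f : FreeAlgebra k (Fin d)) : Prop :=
  f ∉ Set.range (algebraMap k (FreeAlgebra k (Fin d)))

/-- The evaluation of elements of `k⟨x⟩` at the tuple of generic `n × n` matrices,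
whose entries are the commuting variables of the polynomial ring
`Rₙ = k[(i,j,l) : i < d, j,l < n]`; the `(j,l)` entry of the `i`-th generic matrix is
the variable `(i,j,l)`. -/
noncomputable def genericEval (k : Type*) [CommSemiring k] (d n : ℕ) :
    FreeAlgebra k (Fin d) →ₐ[k]
      Matrix (Fin n) (Fin n) (MvPolynomial (Fin d × Fin n × Fin n) k) :=
  FreeAlgebra.lift k fun i => Matrix.of fun j l => MvPolynomial.X (i, j, l)

open Fin.NatCast Fin.CommRing

section Aux

variable {k : Type*} [Field k] {d : ℕ}

lemma esymm_single_one (l : List (Fin d)) :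
    (FreeAlgebra.equivMonoidAlgebraFreeMonoid (R := k) (X := Fin d)).symm
      (MonoidAlgebra.single (FreeMonoid.ofList l) 1)
      = (l.map (FreeAlgebra.ι k)).prod := by
  induction l with
  | nil =>
      rw [FreeMonoid.ofList_nil,
        show (MonoidAlgebra.single (1 : FreeMonoid (Fin d)) (1:k)) = 1 from rfl]
      simpa using map_one (FreeAlgebra.equivMonoidAlgebraFreeMonoid (R := k) (X := Fin d)).symm
  | cons i t ih =>
      have h1 : (FreeMonoid.ofList (i :: t)) = FreeMonoid.of i * FreeMonoid.ofList t := rfl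
      rw [List.map_cons, List.prod_cons, ← ih, h1]
      rw [show (MonoidAlgebra.single (FreeMonoid.of i * FreeMonoid.ofList t) (1:k))
        = MonoidAlgebra.single (FreeMonoid.of i) 1 * MonoidAlgebra.single (FreeMonoid.ofList t) 1 by
          rw [MonoidAlgebra.single_mul_single, one_mul]]
      rw [map_mul]
      congr 1
      apply (FreeAlgebra.equivMonoidAlgebraFreeMonoid (R := k) (X := Fin d)).injective
      simp [FreeAlgebra.equivMonoidAlgebraFreeMonoid]

/-- The coefficients of an element of the free algebra, as a finitely supported
function on words. -/
noncomputable def coeffs (f : FreeAlgebra k (Fin d)) :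
    FreeMonoid (Fin d) →₀ k :=
  (FreeAlgebra.equivMonoidAlgebraFreeMonoid f).coeff

lemma algHom_symm_sum {B : Type*} [Semiring B] [Algebra k B]
    (φ : FreeAlgebra k (Fin d) →ₐ[k] B) (F : FreeMonoid (Fin d) →₀ k) :
    φ ((FreeAlgebra.equivMonoidAlgebraFreeMonoid (R := k) (X := Fin d)).symm (MonoidAlgebra.ofCoeff F))
      = F.sum fun w c =>
      c • ((FreeMonoid.toList w).map fun i => φ (FreeAlgebra.ι k i)).prod := by
  induction F using Finsupp.induction with
  | zero => simp
  | single_add w c F hw hc ih =>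
      rw [Finsupp.sum_add_index' (by intro w; simp) (by intro w c1 c2; rw [add_smul]), ← ih]
      rw [MonoidAlgebra.ofCoeff_add, map_add, map_add]
      congr 1
      rw [Finsupp.sum_single_index (by simp)]
      have : (Finsupp.single w c) = c • Finsupp.single w (1:k) := by
        rw [Finsupp.smul_single', mul_one]
      rw [this, MonoidAlgebra.ofCoeff_smul, map_smul, map_smul, ← FreeMonoid.ofList_toList w]
      rw [MonoidAlgebra.ofCoeff_single, esymm_single_one, map_list_prod, List.map_map, FreeMonoid.toList_ofList]
      rfl

lemma algHom_apply_eq_sum {B : Type*} [Semiring B] [Algebra k B]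
    (φ : FreeAlgebra k (Fin d) →ₐ[k] B) (f : FreeAlgebra k (Fin d)) :
    φ f = (coeffs f).sum fun w c =>
      c • ((FreeMonoid.toList w).map fun i => φ (FreeAlgebra.ι k i)).prod := by
  conv_lhs => rw [← (FreeAlgebra.equivMonoidAlgebraFreeMonoid
    (R := k) (X := Fin d)).symm_apply_apply f]
  exact algHom_symm_sum φ _

variable (k d) in
/-- Weighted cyclic-shift matrices. -/
noncomputable def Agen (n : ℕ) [NeZero n] (i : Fin d) :
    Matrix (Fin n) (Fin n) (MvPolynomial (Fin d × Fin n) k) :=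
  Matrix.of fun j l => if l = j + 1 then MvPolynomial.X (i, j) else 0

variable (k) in
noncomputable def prodX {n : ℕ} [NeZero n] : List (Fin d) → Fin n → MvPolynomial (Fin d × Fin n) k
  | [], _ => 1
  | i :: l, j => MvPolynomial.X (i, j) * prodX l (j + 1)

noncomputable def mon {n : ℕ} [NeZero n] : List (Fin d) → Fin n → ((Fin d × Fin n) →₀ ℕ)
  | [], _ => 0
  | i :: l, j => Finsupp.single (i, j) 1 + mon l (j + 1)

lemma wordProd {n : ℕ} [NeZero n] (l : List (Fin d)) :
    (l.map (Agen k d n)).prod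
      = Matrix.of (fun j m => if m = j + (l.length : Fin n) then prodX k l j else 0) := by
  induction l with
  | nil =>
      ext j m
      simp [Matrix.one_apply, prodX, eq_comm]
  | cons i l ih =>
      ext j m
      rw [List.map_cons, List.prod_cons, ih, Matrix.mul_apply]
      rw [Finset.sum_eq_single (j + 1)]
      · have hA : Agen k d n i j (j+1) = MvPolynomial.X (i, j) := by
          simp [Agen]
        rw [hA, Matrix.of_apply, mul_ite, mul_zero]
        have hc : (j + 1) + (l.length : Fin n) = j + ((l.length + 1 : ℕ) : Fin n) := by
          push_cast
          ring
        rw [hc]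
        simp only [Matrix.of_apply, List.length_cons]
        rfl
      · intro p _ hp
        have hA : Agen k d n i j p = 0 := by
          simp [Agen, hp]
        rw [hA, zero_mul]
      · intro h
        exact absurd (Finset.mem_univ _) h

variable (k d) in
noncomputable def SAgen (n : ℕ) [NeZero n] (i : Fin d) :
    Matrix (Fin n) (Fin n) (Polynomial (MvPolynomial (Fin d × Fin n) k)) :=
  (Polynomial.X : Polynomial (MvPolynomial (Fin d × Fin n) k)) • (Agen k d n i).map Polynomial.C

lemma SAwordProd {n : ℕ} [NeZero n] (l : List (Fin d)) :
    (l.map (SAgen k d n)).prod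
      = (Polynomial.X : Polynomial (MvPolynomial (Fin d × Fin n) k)) ^ l.length •
        ((l.map (Agen k d n)).prod).map Polynomial.C := by
  induction l with
  | nil =>
      simp [Matrix.map_one]
  | cons i l ih =>
      rw [List.map_cons, List.prod_cons, ih, List.map_cons, List.prod_cons, SAgen]
      rw [Matrix.smul_mul, Matrix.mul_smul, smul_smul, ← Matrix.map_mul]
      rw [List.length_cons, pow_succ']

lemma prodX_eq_monomial {n : ℕ} [NeZero n] (l : List (Fin d)) (j : Fin n) :
    prodX k l j = MvPolynomial.monomial (mon l j) 1 := by
  induction l generalizing j with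
  | nil => simp [prodX, mon]
  | cons i l ih =>
      rw [show prodX k (i :: l) j = MvPolynomial.X (i, j) * prodX k l (j+1) from rfl,
        ih, show (mon (i :: l) j : (Fin d × Fin n) →₀ ℕ)
          = Finsupp.single (i, j) 1 + mon l (j + 1) from rfl]
      rw [MvPolynomial.X, MvPolynomial.monomial_mul, one_mul]

lemma mon_support {n : ℕ} [NeZero n] : ∀ (l : List (Fin d)) (j : Fin n) (p : Fin d × Fin n),
    mon l j p ≠ 0 → ∃ s, s < l.length ∧ p.2 = j + (s : Fin n) := by
  intro l
  induction l with
  | nil => intro j p hp; simp [mon] at hp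
  | cons i l ih =>
      intro j p hp
      rw [show (mon (i :: l) j : (Fin d × Fin n) →₀ ℕ)
          = Finsupp.single (i, j) 1 + mon l (j + 1) from rfl, Finsupp.add_apply] at hp
      by_cases hpe : p = (i, j)
      · exact ⟨0, by simp, by rw [hpe]; simp⟩
      · have h1 : Finsupp.single (i, j) (1:ℕ) p = 0 :=
          Finsupp.single_apply_eq_zero.2 (fun h => absurd h hpe)
        rw [h1, zero_add] at hp
        obtain ⟨s, hs, hps⟩ := ih (j + 1) p hp
        refine ⟨s + 1, by simpa using hs, ?_⟩
        rw [hps]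
        push_cast
        ring

lemma mon_inj {n : ℕ} [NeZero n] : ∀ (l₁ l₂ : List (Fin d)) (j : Fin n),
    l₁.length = l₂.length → l₁.length ≤ n → mon l₁ j = mon l₂ j → l₁ = l₂ := by
  intro l₁
  induction l₁ with
  | nil =>
      intro l₂ j hlen _ _
      exact (List.length_eq_zero_iff.1 hlen.symm).symm
  | cons i₁ t₁ ih =>
      intro l₂ j hlen hn hmon
      cases l₂ with
      | nil => simp at hlen
      | cons i₂ t₂ =>
          have hlen' : t₁.length = t₂.length := by simpa using hlen
          have key : ∀ (t : List (Fin d)) (i' : Fin d), t.length + 1 ≤ n →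
              mon t (j + 1) (i', j) = 0 := by
            intro t i' htn
            by_contra hne
            obtain ⟨s, hs, hcol⟩ := mon_support t (j+1) (i', j) hne
            simp only at hcol
            have h0 : ((s + 1 : ℕ) : Fin n) = 0 := by
              have hj : j + ((s + 1 : ℕ) : Fin n) = j + 0 := by
                push_cast
                rw [add_zero]
                conv_rhs => rw [hcol]
                ring
              exact add_left_cancel hj
            rw [Fin.natCast_eq_zero] at h0
            have := Nat.le_of_dvd (by omega) h0
            omega
          rw [show (mon (i₁ :: t₁) j : (Fin d × Fin n) →₀ ℕ)
              = Finsupp.single (i₁, j) 1 + mon t₁ (j + 1) from rfl,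
            show (mon (i₂ :: t₂) j : (Fin d × Fin n) →₀ ℕ)
              = Finsupp.single (i₂, j) 1 + mon t₂ (j + 1) from rfl] at hmon
          have hn₁ : t₁.length + 1 ≤ n := by simpa using hn
          have hn₂ : t₂.length + 1 ≤ n := by rw [hlen'] at hn₁; exact hn₁
          have hval := DFunLike.congr_fun hmon (i₁, j)
          simp only [Finsupp.add_apply] at hval
          rw [key t₁ i₁ hn₁, key t₂ i₁ hn₂, add_zero, add_zero,
            Finsupp.single_eq_same, Finsupp.single_apply] at hval
          have hi : i₂ = i₁ := by
            by_contra hne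
            rw [if_neg (by simp [hne])] at hval
            exact one_ne_zero hval
          subst hi
          have htail : mon t₁ (j + 1) = mon t₂ (j + 1) := add_left_cancel hmon
          rw [ih t₂ (j + 1) hlen' (by omega) htail]

lemma coeff_det_top {R : Type*} [CommRing R] {n D : ℕ}
    (M : Matrix (Fin n) (Fin n) (Polynomial R))
    (hM : ∀ j m, (M j m).natDegree ≤ D) :
    (M.det).coeff (n * D) = (Matrix.of fun j m => (M j m).coeff D).det := by
  rw [Matrix.det_apply, Matrix.det_apply, Polynomial.finset_sum_coeff]
  apply Finset.sum_congr rfl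
  intro σ _
  rw [Polynomial.coeff_smul]
  congr 1
  have := Polynomial.coeff_prod_of_natDegree_le (s := (Finset.univ : Finset (Fin n)))
    (f := fun j => M (σ j) j) D (fun p _ => hM _ _)
  simpa using this


lemma natDegree_term_le {R : Type*} [CommRing R] {k : Type*} [Field k] [Algebra k R]
    (c : k) (L : ℕ) (e : R) {D : ℕ} (hL : L ≤ D) :
    (c • ((Polynomial.X : Polynomial R) ^ L * Polynomial.C e)).natDegree ≤ D := by
  rw [Algebra.smul_def, Polynomial.algebraMap_apply]
  refine le_trans (Polynomial.natDegree_mul_le) ?_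
  rw [Polynomial.natDegree_C, zero_add]
  refine le_trans (Polynomial.natDegree_mul_le) ?_
  rw [Polynomial.natDegree_C, add_zero]
  exact le_trans (Polynomial.natDegree_X_pow_le L) hL

end Aux

/-- If `f ∈ k⟨x⟩` is nonconstant, then for all large enough `n` the determinant
`det f(𝔛ⁿ)` is a nonconstant commutative polynomial. -/
theorem det_genericEval_nonconstant (k : Type*) [Field k] (d : ℕ) (hd : 0 < d)
    (f : FreeAlgebra k (Fin d)) (hf : Nonconstant k d f) :
    ∃ N : ℕ, ∀ n : ℕ, N ≤ n →
      (genericEval k d n f).det ∉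
        Set.range (algebraMap k (MvPolynomial (Fin d × Fin n × Fin n) k)) := by
  classical
  set F := coeffs f with hFdef
  have hex : ∃ w ∈ F.support, w ≠ 1 := by
    by_contra h
    push_neg at h
    apply hf
    refine ⟨F 1, ?_⟩
    have hsub : F.support ⊆ {1} := fun w hw => Finset.mem_singleton.2 (h w hw)
    have hF1 : F = Finsupp.single 1 (F 1) := Finsupp.support_subset_singleton.1 hsub
    have hsm : (F 1) • (1 : MonoidAlgebra k (FreeMonoid (Fin d)))
        = MonoidAlgebra.ofCoeff (Finsupp.single 1 (F 1)) := by
      rw [MonoidAlgebra.one_def, MonoidAlgebra.smul_single', mul_one]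
      rfl
    calc algebraMap k (FreeAlgebra k (Fin d)) (F 1)
        = (F 1) • 1 := Algebra.algebraMap_eq_smul_one _
      _ = (F 1) • (FreeAlgebra.equivMonoidAlgebraFreeMonoid
            (R := k) (X := Fin d)).symm 1 := congrArg (fun x => (F 1) • x)
              (map_one (FreeAlgebra.equivMonoidAlgebraFreeMonoid
                (R := k) (X := Fin d)).symm).symm
      _ = (FreeAlgebra.equivMonoidAlgebraFreeMonoid
            (R := k) (X := Fin d)).symm ((F 1) • 1) := (map_smul _ _ _).symm
      _ = (FreeAlgebra.equivMonoidAlgebraFreeMonoid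
            (R := k) (X := Fin d)).symm (MonoidAlgebra.ofCoeff F) := by rw [hsm, ← hF1]
      _ = f := (FreeAlgebra.equivMonoidAlgebraFreeMonoid
            (R := k) (X := Fin d)).symm_apply_apply f
  obtain ⟨w₁, hw₁, hw₁ne⟩ := hex
  set D := F.support.sup (fun w => (FreeMonoid.toList w).length) with hDdef
  have hD1 : 1 ≤ D := by
    have hlen1 : 1 ≤ (FreeMonoid.toList w₁).length := by
      rcases Nat.eq_zero_or_pos (FreeMonoid.toList w₁).length with h | h
      · exact absurd (by rw [← FreeMonoid.ofList_toList w₁, List.length_eq_zero_iff.1 h]; rfl) hw₁ne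
      · omega
    exact le_trans hlen1 (Finset.le_sup (f := fun w => (FreeMonoid.toList w).length) hw₁)
  obtain ⟨w₀, hw₀, hw₀len⟩ := Finset.exists_mem_eq_sup F.support ⟨w₁, hw₁⟩
      (fun w => (FreeMonoid.toList w).length)
  rw [← hDdef] at hw₀len
  refine ⟨D, fun n hn => ?_⟩
  haveI : NeZero n := ⟨by omega⟩
  rintro ⟨κ, hκ⟩
  set R' := MvPolynomial (Fin d × Fin n) k with hR'def
  set Φ : MvPolynomial (Fin d × Fin n × Fin n) k →ₐ[k] Polynomial R' :=
    MvPolynomial.aeval fun v => Polynomial.C (Agen k d n v.1 v.2.1 v.2.2) * Polynomial.X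
    with hΦdef
  set M : Matrix (Fin n) (Fin n) (Polynomial R') := (genericEval k d n f).map Φ with hMdef
  have hMdet : M.det = Polynomial.C (algebraMap k R' κ) := by
    rw [hMdef]
    have h1 := RingHom.map_det (Φ.toRingHom) ((genericEval k d n) f)
    rw [show ((genericEval k d n) f).map ⇑Φ
      = Φ.toRingHom.mapMatrix ((genericEval k d n) f) from rfl, ← h1, ← hκ]
    rw [show Φ.toRingHom ((algebraMap k (MvPolynomial (Fin d × Fin n × Fin n) k)) κ)
      = Φ ((algebraMap k (MvPolynomial (Fin d × Fin n × Fin n) k)) κ) from rfl]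
    rw [Φ.commutes κ, Polynomial.algebraMap_apply]
  -- the algebra map into scaled shift matrices
  set ξ : FreeAlgebra k (Fin d) →ₐ[k] Matrix (Fin n) (Fin n) (Polynomial R') :=
    (AlgHom.mapMatrix Φ).comp (genericEval k d n) with hξdef
  have hMeq : M = ξ f := by
    rw [hMdef, hξdef]
    rfl
  have hξι : ∀ i : Fin d, ξ (FreeAlgebra.ι k i) = SAgen k d n i := by
    intro i
    rw [hξdef]
    refine Matrix.ext (fun j m => ?_)
    simp only [AlgHom.comp_apply, genericEval, FreeAlgebra.lift_ι_apply,
      AlgHom.mapMatrix_apply, Matrix.map_apply, Matrix.of_apply, SAgen,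
      Matrix.smul_apply, Agen, smul_eq_mul, hΦdef, MvPolynomial.aeval_X]
    split_ifs <;> ring
  have hMsum : M = F.sum fun w c => c •
      ((Polynomial.X : Polynomial R') ^ (FreeMonoid.toList w).length •
        ((((FreeMonoid.toList w).map (Agen k d n)).prod).map Polynomial.C)) := by
    rw [hMeq, algHom_apply_eq_sum ξ f, ← hFdef]
    apply Finsupp.sum_congr
    intro w _
    congr 1
    have hfun : (fun i => ξ (FreeAlgebra.ι k i)) = SAgen k d n := funext hξι
    rw [hfun, SAwordProd]
  set T := F.support.filter (fun w => (FreeMonoid.toList w).length = D) with hTdef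
  set β : Fin n → R' := fun j => ∑ w ∈ T, F w • prodX k (FreeMonoid.toList w) j with hβdef
  set Ncoef : Matrix (Fin n) (Fin n) R' :=
    Matrix.of (fun j m => if m = j + (D : Fin n) then β j else 0) with hNdef
  have hentry : ∀ j m, M j m = ∑ w ∈ F.support, F w •
      ((Polynomial.X : Polynomial R') ^ (FreeMonoid.toList w).length *
        Polynomial.C (if m = j + ((FreeMonoid.toList w).length : Fin n)
          then prodX k (FreeMonoid.toList w) j else 0)) := by
    intro j m
    rw [hMsum, Finsupp.sum, Matrix.sum_apply]
    apply Finset.sum_congr rfl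
    intro w _
    rw [Matrix.smul_apply, Matrix.smul_apply, Matrix.map_apply, wordProd]
    rw [Matrix.of_apply, smul_eq_mul]
  have hcoefentry : ∀ j m, (M j m).coeff D = Ncoef j m := by
    intro j m
    rw [hentry j m, Polynomial.finset_sum_coeff]
    have step : ∀ w ∈ F.support, (F w •
        ((Polynomial.X : Polynomial R') ^ (FreeMonoid.toList w).length *
          Polynomial.C (if m = j + ((FreeMonoid.toList w).length : Fin n)
            then prodX k (FreeMonoid.toList w) j else 0))).coeff D
        = if (FreeMonoid.toList w).length = D
            then (if m = j + (D : Fin n) then F w • prodX k (FreeMonoid.toList w) j else 0)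
            else 0 := by
      intro w _
      rw [Polynomial.coeff_smul, mul_comm, Polynomial.C_mul_X_pow_eq_monomial,
        Polynomial.coeff_monomial]
      by_cases h1 : (FreeMonoid.toList w).length = D
      · rw [if_pos h1, if_pos h1, h1]
        by_cases h2 : m = j + (D : Fin n)
        · rw [if_pos h2, if_pos h2]
        · rw [if_neg h2, if_neg h2, smul_zero]
      · rw [if_neg h1, if_neg h1, smul_zero]
    rw [Finset.sum_congr rfl step, ← Finset.sum_filter, ← hTdef]
    by_cases h2 : m = j + (D : Fin n)
    · simp only [if_pos h2]
      rw [hNdef, Matrix.of_apply, if_pos h2, hβdef]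
    · simp only [if_neg h2, Finset.sum_const_zero]
      rw [hNdef, Matrix.of_apply, if_neg h2]
  have hdeg : ∀ j m, (M j m).natDegree ≤ D := by
    intro j m
    rw [hentry j m]
    apply Polynomial.natDegree_sum_le_of_forall_le
    intro w hw
    exact natDegree_term_le _ _ _
      (Finset.le_sup (f := fun w => (FreeMonoid.toList w).length) hw)
  -- each β j is nonzero
  have hβne : ∀ j : Fin n, β j ≠ 0 := by
    intro j h
    have hw₀T : w₀ ∈ T := Finset.mem_filter.2 ⟨hw₀, hw₀len.symm⟩
    have hc := congrArg (MvPolynomial.coeff (mon (FreeMonoid.toList w₀) j)) h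
    rw [hβdef] at hc
    simp only [MvPolynomial.coeff_zero] at hc
    rw [MvPolynomial.coeff_sum] at hc
    have hstep : ∀ w ∈ T, MvPolynomial.coeff (mon (FreeMonoid.toList w₀) j)
        (F w • prodX k (FreeMonoid.toList w) j) = if w = w₀ then F w₀ else 0 := by
      intro w hwT
      rw [prodX_eq_monomial, MvPolynomial.coeff_smul, MvPolynomial.coeff_monomial]
      by_cases he : w = w₀
      · rw [if_pos he, if_pos (by rw [he]), he, smul_eq_mul, mul_one]
      · rw [if_neg he, if_neg, smul_zero]
        intro hmm
        apply he
        have hlw : (FreeMonoid.toList w).length = D := (Finset.mem_filter.1 hwT).2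
        have hlw0 : (FreeMonoid.toList w₀).length = D := hw₀len.symm
        have heq := mon_inj (FreeMonoid.toList w) (FreeMonoid.toList w₀) j
          (by rw [hlw, hlw0]) (by rw [hlw]; omega) hmm
        calc w = FreeMonoid.ofList (FreeMonoid.toList w) := (FreeMonoid.ofList_toList w).symm
          _ = FreeMonoid.ofList (FreeMonoid.toList w₀) := by rw [heq]
          _ = w₀ := FreeMonoid.ofList_toList w₀
    rw [Finset.sum_congr rfl hstep, Finset.sum_ite_eq' T w₀ (fun _ => F w₀),
      if_pos hw₀T] at hc
    exact Finsupp.mem_support_iff.1 hw₀ hc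
  -- the determinant of the coefficient matrix vanishes
  have h0 : (M.det).coeff (n * D) = 0 := by
    rw [hMdet, Polynomial.coeff_C, if_neg (by
      have : 0 < n * D := Nat.mul_pos (by omega) (by omega)
      omega)]
  have h1 : (M.det).coeff (n * D) = Ncoef.det := by
    rw [coeff_det_top M hdeg]
    congr 1
    refine Matrix.ext (fun j m => ?_)
    rw [Matrix.of_apply, hcoefentry]
  have hNdet0 : Ncoef.det = 0 := by rw [← h1, h0]
  -- but it is (up to sign) the product of the β's
  set σp : Equiv.Perm (Fin n) := Equiv.addRight ((D : ℕ) : Fin n) with hσdef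
  have hsub : Ncoef.submatrix id σp = Matrix.diagonal β := by
    refine Matrix.ext (fun j m => ?_)
    have hσ : σp m = m + ((D : ℕ) : Fin n) := rfl
    simp only [Matrix.submatrix_apply, id_eq, Matrix.diagonal_apply, hNdef,
      Matrix.of_apply, hσ]
    by_cases h : m = j
    · subst h; rw [if_pos rfl, if_pos rfl]
    · rw [if_neg (fun hh => h (add_right_cancel hh)), if_neg (fun hh => h hh.symm)]
  have hperm := Matrix.det_permute' σp Ncoef
  rw [hsub, Matrix.det_diagonal, hNdet0, mul_zero] at hperm
  exact (Finset.prod_ne_zero_iff.2 fun j _ => hβne j) hperm
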